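/- Let x* ∈ X and set y* := y(x*). Then x* is S-stationary for (SPO) if and only if (x*, y*) is a KKT point of (SPOcp). -/

import Mathlib

open Filter Topology

noncomputable section

/-- Euclidean n-space. -/
abbrev E (n : ℕ) : Type := EuclideanSpace ℝ (Fin n)

/-- The SP-Lagrangian L(x, λ, μ) = f(x) + λᵀg(x) + μᵀh(x). -/
def LSP {n m q : ℕ} (f : E n → ℝ) (g : Fin m → E n → ℝ) (h : Fin q → E n → ℝ)
    (lam : Fin m → ℝ) (mu : Fin q → ℝ) (x : E n) : ℝ :=
  f x + (∑ i, lam i * g i x) + (∑ j, mu j * h j x)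

/-- S-stationarity of x* for (SPO). -/
def SStat {n m q : ℕ} (f : E n → ℝ) (g : Fin m → E n → ℝ) (h : Fin q → E n → ℝ)
    (xstar : E n) : Prop :=
  ∃ (lam : Fin m → ℝ) (mu : Fin q → ℝ),
    (∀ i, 0 ≤ lam i) ∧ (∀ i, lam i * g i xstar = 0) ∧
    ∀ i, xstar i ≠ 0 → gradient (LSP f g h lam mu) xstar i = 0

/-- KKT point of the complementarity reformulation (SPOcp). -/
def KKTcp {n m q : ℕ} (f : E n → ℝ) (g : Fin m → E n → ℝ) (h : Fin q → E n → ℝ)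
    (p : Fin n → ℝ → ℝ) (x y : E n) : Prop :=
  (∀ i, g i x ≤ 0) ∧ (∀ j, h j x = 0) ∧ (∀ i, 0 ≤ x i) ∧ (∀ i, 0 ≤ y i) ∧
  (∀ i, x i * y i = 0) ∧
  ∃ (lam : Fin m → ℝ) (mu : Fin q → ℝ) (νx νy γ : Fin n → ℝ),
    (∀ i, 0 ≤ lam i) ∧ (∀ i, lam i * g i x = 0) ∧
    (∀ i, 0 ≤ νx i) ∧ (∀ i, νx i * x i = 0) ∧
    (∀ i, 0 ≤ νy i) ∧ (∀ i, νy i * y i = 0) ∧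
    (∀ k, gradient f x k + (∑ i, lam i * gradient (g i) x k) +
        (∑ j, mu j * gradient (h j) x k) - νx k + γ k * y k = 0) ∧
    (∀ i, deriv (p i) (y i) - νy i + γ i * x i = 0)

/-- Gradient component as fderiv applied to a basis vector. -/
lemma aux_grad_apply {n : ℕ} (F : E n → ℝ) (x : E n) (k : Fin n) :
    gradient F x k = fderiv ℝ F x (EuclideanSpace.single k 1) := by
  have h1 : fderiv ℝ F x = InnerProductSpace.toDual ℝ (E n) (gradient F x) := by
    rw [gradient, (InnerProductSpace.toDual ℝ (E n)).apply_symm_apply]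
  rw [h1, InnerProductSpace.toDual_apply_apply, EuclideanSpace.inner_single_right]
  simp

/-- Gradient of the Lagrangian splits into the sum of gradients. -/
lemma aux_grad_LSP {n m q : ℕ} (f : E n → ℝ) (g : Fin m → E n → ℝ) (h : Fin q → E n → ℝ)
    (hf : ContDiff ℝ 1 f) (hg : ∀ i, ContDiff ℝ 1 (g i)) (hh : ∀ j, ContDiff ℝ 1 (h j))
    (lam : Fin m → ℝ) (mu : Fin q → ℝ) (x : E n) (k : Fin n) :
    gradient (LSP f g h lam mu) x k = gradient f x k + (∑ i, lam i * gradient (g i) x k)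
      + (∑ j, mu j * gradient (h j) x k) := by
  have Hf : HasFDerivAt f (fderiv ℝ f x) x :=
    (hf.differentiable one_ne_zero x).hasFDerivAt
  have Hg : HasFDerivAt (fun y => ∑ i, lam i * g i y) (∑ i, lam i • fderiv ℝ (g i) x) x :=
    HasFDerivAt.fun_sum fun i _ => (((hg i).differentiable one_ne_zero x).hasFDerivAt).const_mul (lam i)
  have Hh : HasFDerivAt (fun y => ∑ j, mu j * h j y) (∑ j, mu j • fderiv ℝ (h j) x) x :=
    HasFDerivAt.fun_sum fun j _ => (((hh j).differentiable one_ne_zero x).hasFDerivAt).const_mul (mu j)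
  have HL : HasFDerivAt (LSP f g h lam mu)
      (fderiv ℝ f x + (∑ i, lam i • fderiv ℝ (g i) x) + (∑ j, mu j • fderiv ℝ (h j) x)) x :=
    (Hf.add Hg).add Hh
  rw [aux_grad_apply, HL.fderiv]
  simp [aux_grad_apply, ContinuousLinearMap.sum_apply]

/-- Let x* ∈ X and y* := y(x*).  Then x* is S-stationary for (SPO)
if and only if (x*, y*) is a KKT point of (SPOcp). -/
theorem stmt_6 {n m q : ℕ} (hn : 1 ≤ n) {ρ : ℝ} (hρ : 0 < ρ)
    (f : E n → ℝ) (g : Fin m → E n → ℝ) (h : Fin q → E n → ℝ)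
    (hf : ContDiff ℝ 1 f) (hg : ∀ i, ContDiff ℝ 1 (g i)) (hh : ∀ j, ContDiff ℝ 1 (h j))
    (p : Fin n → ℝ → ℝ) (s : Fin n → ℝ)
    (hp : ∀ i, ContDiff ℝ 1 (p i))
    (hconv : ∀ i, ConvexOn ℝ Set.univ (p i))
    (hspos : ∀ i, 0 < s i)
    (hmin : ∀ i t, p i (s i) ≤ p i t)
    (hstrict : ∀ i t, t ≠ s i → p i (s i) < p i t)
    (hscale : ∀ i, p i 0 - p i (s i) = ρ)
    (xstar : E n)
    -- x* ∈ X :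
    (hgx : ∀ i, g i xstar ≤ 0) (hhx : ∀ j, h j xstar = 0) (hxnn : ∀ i, 0 ≤ xstar i)
    -- y* := y(x*) :
    (ystar : E n)
    (hy : ∀ i, (xstar i = 0 → ystar i = s i) ∧ (xstar i ≠ 0 → ystar i = 0)) :
    SStat f g h xstar ↔ KKTcp f g h p xstar ystar := by
  constructor
  · rintro ⟨lam, mu, hlam, hcomp, hgrad⟩
    have hynn : ∀ i, 0 ≤ ystar i := by
      intro i
      by_cases hx : xstar i = 0
      · rw [(hy i).1 hx]; exact (hspos i).le
      · rw [(hy i).2 hx]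
    have hxy : ∀ i, xstar i * ystar i = 0 := by
      intro i
      by_cases hx : xstar i = 0
      · rw [hx, zero_mul]
      · rw [(hy i).2 hx, mul_zero]
    have hders : ∀ i, deriv (p i) (s i) = 0 := by
      intro i
      have hloc : IsLocalMin (p i) (s i) := Filter.Eventually.of_forall (hmin i)
      exact hloc.deriv_eq_zero
    set Grad : Fin n → ℝ := fun k => gradient f xstar k + (∑ i, lam i * gradient (g i) xstar k)
      + (∑ j, mu j * gradient (h j) xstar k) with hGrad
    have hGeq : ∀ k, xstar k ≠ 0 → Grad k = 0 := by
      intro k hk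
      rw [hGrad]
      simpa [aux_grad_LSP f g h hf hg hh lam mu xstar k] using hgrad k hk
    refine ⟨hgx, hhx, hxnn, hynn, hxy, lam, mu, 0, 0,
      fun k => if xstar k = 0 then -(Grad k) / (s k) else -(deriv (p k) 0) / (xstar k),
      hlam, hcomp, fun i => le_rfl, fun i => zero_mul _, fun i => le_rfl, fun i => zero_mul _,
      ?_, ?_⟩
    · intro k
      by_cases hx : xstar k = 0
      · have hys : ystar k = s k := (hy k).1 hx
        have hs : s k ≠ 0 := (hspos k).ne'
        have : Grad k - 0 + -(Grad k) / s k * s k = 0 := by field_simp; ring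
        simpa only [hx, if_pos, hys, Pi.zero_apply, hGrad] using this
      · have hy0 : ystar k = 0 := (hy k).2 hx
        have : Grad k - 0 + -(deriv (p k) 0) / xstar k * 0 = 0 := by
          simp [hGeq k hx]
        simpa only [if_neg hx, hy0, Pi.zero_apply, hGrad] using this
    · intro i
      by_cases hx : xstar i = 0
      · have hys : ystar i = s i := (hy i).1 hx
        simp [hys, hders i, hx]
      · have hy0 : ystar i = 0 := (hy i).2 hx
        simp only [if_neg hx, hy0, Pi.zero_apply, sub_zero]
        field_simp
        ring
  · rintro ⟨-, -, -, -, -, lam, mu, νx, νy, γ, hlam, hcomp, -, hνxc, -, -, hgradeq, -⟩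
    refine ⟨lam, mu, hlam, hcomp, ?_⟩
    intro i hi
    have hνx0 : νx i = 0 := by
      rcases mul_eq_zero.1 (hνxc i) with h' | h'
      · exact h'
      · exact absurd h' hi
    have hy0 : ystar i = 0 := (hy i).2 hi
    have := hgradeq i
    rw [hνx0, hy0, mul_zero, add_zero, sub_zero] at this
    rw [aux_grad_LSP f g h hf hg hh lam mu xstar i]
    exact this
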